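/- Let K and K' be positive real constants and let {ξ_n}_{n≥0} be a real-valued process adapted to a filtration {𝓕_n}_{n≥0} on a probability space, with ξ_0 integrable, such that almost surely for every n: E(ξ_{n+1} | 𝓕_n) ≥ ξ_n + K and |ξ_{n+1} − ξ_n| ≤ K'. Then liminf_{n→∞} ξ_n/n ≥ K almost surely. -/

import Mathlib

open MeasureTheory Filter

open Finset Topology

theorem aux_mds_slln {Ω : Type*} {m : MeasurableSpace Ω} (μ : Measure Ω) [IsProbabilityMeasure μ]
    (𝓕 : Filtration ℕ m) (D : ℕ → Ω → ℝ) (c : ℝ) (hc : 0 < c)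
    (hmeas : ∀ k, StronglyMeasurable[𝓕 (k+1)] (D k))
    (hbd : ∀ k, ∀ᵐ ω ∂μ, |D k ω| ≤ c)
    (hce : ∀ k, μ[D k | 𝓕 k] =ᵐ[μ] 0) :
    ∀ᵐ ω ∂μ, Tendsto (fun n => (∑ k ∈ Finset.range n, D k ω)/(n:ℝ)) atTop (𝓝 0) := by
  set S : ℕ → Ω → ℝ := fun n ω => ∑ k ∈ Finset.range n, D k ω with hS
  have hDm : ∀ k, StronglyMeasurable (D k) := fun k => (hmeas k).mono (𝓕.le _)
  have hDint : ∀ k, Integrable (D k) μ := by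
    intro k
    refine Integrable.mono' (integrable_const c) (hDm k).aestronglyMeasurable ?_
    filter_upwards [hbd k] with ω h using by rwa [Real.norm_eq_abs]
  have hSm : ∀ n, StronglyMeasurable[𝓕 n] (S n) := by
    intro n
    apply Finset.stronglyMeasurable_fun_sum
    intro k hk
    exact (hmeas k).mono (𝓕.mono (Finset.mem_range.1 hk))
  have hSbd : ∀ n, ∀ᵐ ω ∂μ, |S n ω| ≤ c * n := by
    intro n
    filter_upwards [ae_all_iff.2 hbd] with ω h
    calc |S n ω| ≤ ∑ k ∈ Finset.range n, |D k ω| := Finset.abs_sum_le_sum_abs _ _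
      _ ≤ ∑ k ∈ Finset.range n, c := Finset.sum_le_sum fun k _ => h k
      _ = c * n := by simp [mul_comm]
  have hS2int : ∀ n, Integrable (fun ω => (S n ω)^2) μ := by
    intro n
    refine Integrable.mono' (integrable_const ((c*n)^2))
      (((hSm n).mono (𝓕.le n)).pow 2).aestronglyMeasurable ?_
    filter_upwards [hSbd n] with ω h
    calc ‖(S n ω)^2‖ = |S n ω|^2 := by rw [Real.norm_eq_abs, abs_pow]
      _ ≤ (c*n)^2 := pow_le_pow_left₀ (abs_nonneg _) h 2
  have hSDint : ∀ n, Integrable (S n * D n) μ := by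
    intro n
    refine Integrable.mono' (integrable_const (c*n*c))
      (((hSm n).mono (𝓕.le n)).mul (hDm n)).aestronglyMeasurable ?_
    filter_upwards [hSbd n, hbd n] with ω h1 h2
    rw [Pi.mul_apply, Real.norm_eq_abs, abs_mul]
    exact mul_le_mul h1 h2 (abs_nonneg _) (by positivity)
  have hcross : ∀ n, ∫ ω, S n ω * D n ω ∂μ = 0 := by
    intro n
    have h2 := condExp_mul_of_stronglyMeasurable_left (hSm n) (hSDint n) (hDint n)
    have h3 : μ[S n * D n | 𝓕 n] =ᵐ[μ] 0 := by
      refine h2.trans ?_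
      filter_upwards [hce n] with ω h
      simp [h]
    have h4 := integral_condExp (μ := μ) (f := S n * D n) (𝓕.le n)
    calc ∫ ω, S n ω * D n ω ∂μ = ∫ ω, (S n * D n) ω ∂μ := rfl
      _ = ∫ ω, (μ[S n * D n | 𝓕 n]) ω ∂μ := h4.symm
      _ = ∫ _ω, (0:ℝ) ∂μ := integral_congr_ae h3
      _ = 0 := integral_zero _ _
  have hvar : ∀ n, ∫ ω, (S n ω)^2 ∂μ ≤ c^2 * n := by
    intro n
    induction n with
    | zero => simp [hS]
    | succ n ih =>
      have hstep : ∀ ω, S (n+1) ω = S n ω + D n ω := fun ω => Finset.sum_range_succ _ _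
      have hD2int : Integrable (fun ω => (D n ω)^2) μ := by
        refine Integrable.mono' (integrable_const (c^2)) ((hDm n).pow 2).aestronglyMeasurable ?_
        filter_upwards [hbd n] with ω h
        calc ‖(D n ω)^2‖ = |D n ω|^2 := by rw [Real.norm_eq_abs, abs_pow]
          _ ≤ c^2 := pow_le_pow_left₀ (abs_nonneg _) h 2
      have hD2 : ∫ ω, (D n ω)^2 ∂μ ≤ c^2 := by
        calc ∫ ω, (D n ω)^2 ∂μ ≤ ∫ _ω, c^2 ∂μ := by
              refine integral_mono_ae hD2int (integrable_const _) ?_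
              filter_upwards [hbd n] with ω h
              calc (D n ω)^2 = |D n ω|^2 := (sq_abs _).symm
                _ ≤ c^2 := pow_le_pow_left₀ (abs_nonneg _) h 2
          _ = c^2 := by simp
      have hexp : ∀ ω, (S (n+1) ω)^2 = (S n ω)^2 + 2*(S n ω * D n ω) + (D n ω)^2 := by
        intro ω; rw [hstep ω]; ring
      calc ∫ ω, (S (n+1) ω)^2 ∂μ
          = ∫ ω, ((S n ω)^2 + 2*(S n ω * D n ω) + (D n ω)^2) ∂μ := by
            exact integral_congr_ae (ae_of_all _ hexp)
        _ = (∫ ω, (S n ω)^2 ∂μ) + 2 * (∫ ω, S n ω * D n ω ∂μ) + ∫ ω, (D n ω)^2 ∂μ := by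
            have h1 : Integrable (fun ω => 2*(S n ω * D n ω)) μ := (hSDint n).const_mul 2
            have h2 : Integrable (fun ω => (S n ω)^2 + 2*(S n ω * D n ω)) μ := (hS2int n).add h1
            rw [integral_add h2 hD2int, integral_add (hS2int n) h1, MeasureTheory.integral_const_mul]
        _ = (∫ ω, (S n ω)^2 ∂μ) + ∫ ω, (D n ω)^2 ∂μ := by rw [hcross n]; ring
        _ ≤ c^2 * n + c^2 := add_le_add ih hD2
        _ = c^2 * (n+1 : ℕ) := by push_cast; ring
  set B : ℕ → ℕ → Set Ω := fun j n =>
    {ω | ((((n:ℝ)+1)^2 / ((j:ℝ)+1))^2 : ℝ) ≤ (S ((n+1)^2) ω)^2} with hB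
  have hcheb : ∀ j n, μ (B j n) ≤ ENNReal.ofReal ((c^2 * ((j:ℝ)+1)^2) / ((n:ℝ)+1)^2) := by
    intro j n
    set ε : ℝ := (((n:ℝ)+1)^2 / ((j:ℝ)+1))^2 with hε
    have hε0 : 0 < ε := by positivity
    have hmark := mul_meas_ge_le_integral_of_nonneg
      (ae_of_all μ fun ω => sq_nonneg (S ((n+1)^2) ω)) (hS2int ((n+1)^2)) ε
    have hvv : ∫ ω, (S ((n+1)^2) ω)^2 ∂μ ≤ c^2 * (((n:ℝ)+1)^2) := by
      have := hvar ((n+1)^2)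
      calc ∫ ω, (S ((n+1)^2) ω)^2 ∂μ ≤ c^2 * (((n+1)^2 : ℕ) : ℝ) := this
        _ = c^2 * (((n:ℝ)+1)^2) := by push_cast; ring
    have hfin : μ (B j n) ≠ ⊤ := measure_ne_top _ _
    rw [ENNReal.le_ofReal_iff_toReal_le hfin (by positivity)]
    have htr : (μ (B j n)).toReal ≤ (c^2 * (((n:ℝ)+1)^2)) / ε := by
      rw [le_div_iff₀ hε0]
      calc (μ (B j n)).toReal * ε = ε * (μ {ω | ε ≤ (S ((n+1)^2) ω)^2}).toReal := by
            rw [mul_comm]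
        _ ≤ ∫ ω, (S ((n+1)^2) ω)^2 ∂μ := hmark
        _ ≤ c^2 * (((n:ℝ)+1)^2) := hvv
    refine htr.trans (le_of_eq ?_)
    rw [hε]
    field_simp
  have hBC : ∀ j : ℕ, ∀ᵐ ω ∂μ, ∀ᶠ n in atTop, ω ∉ B j n := by
    intro j
    refine ae_eventually_notMem (ne_of_lt (lt_of_le_of_lt (ENNReal.tsum_le_tsum (hcheb j)) ?_))
    have hnn : ∀ n : ℕ, 0 ≤ (c^2 * ((j:ℝ)+1)^2) / ((n:ℝ)+1)^2 := fun n => by positivity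
    have hsum : Summable (fun n : ℕ => (c^2 * ((j:ℝ)+1)^2) / ((n:ℝ)+1)^2) := by
      have h1 : Summable (fun n : ℕ => 1 / ((n:ℝ))^2) :=
        Real.summable_one_div_nat_pow.2 (by norm_num)
      have h2 : Summable (fun n : ℕ => 1 / ((n:ℝ)+1)^2) := by
        have := (summable_nat_add_iff 1).2 h1
        simpa using this
      have := h2.mul_left (c^2 * ((j:ℝ)+1)^2)
      simpa [mul_one_div, div_eq_mul_inv] using this
    rw [← ENNReal.ofReal_tsum_of_nonneg hnn hsum]
    exact ENNReal.ofReal_lt_top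
  have hsqrt_tend : Tendsto (fun m : ℕ => Nat.sqrt m) atTop atTop := by
    refine tendsto_atTop_atTop.2 fun b => ⟨b*b, fun m hm => ?_⟩
    calc b = Nat.sqrt (b*b) := by rw [← pow_two]; exact (Nat.sqrt_eq' b).symm
      _ ≤ Nat.sqrt m := Nat.sqrt_le_sqrt hm
  have hdiffbd : ∀ᵐ ω ∂μ, ∀ a b : ℕ, a ≤ b → |S b ω - S a ω| ≤ c * ((b:ℝ) - a) := by
    filter_upwards [ae_all_iff.2 hbd] with ω h a b hab
    have h1 : S b ω - S a ω = ∑ k ∈ Finset.Ico a b, D k ω :=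
      (Finset.sum_Ico_eq_sub _ hab).symm
    rw [h1]
    calc |∑ k ∈ Finset.Ico a b, D k ω| ≤ ∑ k ∈ Finset.Ico a b, |D k ω| :=
          Finset.abs_sum_le_sum_abs _ _
      _ ≤ ∑ k ∈ Finset.Ico a b, c := Finset.sum_le_sum fun k _ => h k
      _ = c * ((b:ℝ) - a) := by
          rw [Finset.sum_const, Nat.card_Ico, nsmul_eq_mul, Nat.cast_sub hab, mul_comm]
  filter_upwards [ae_all_iff.2 hBC, hdiffbd] with ω hBCω hdiffω
  have key : ∀ ε : ℝ, 0 < ε → ∀ᶠ m : ℕ in atTop, |S m ω / m| < ε := by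
    intro ε hε
    obtain ⟨j, hj⟩ : ∃ j : ℕ, 2/ε < (j:ℝ)+1 := by
      obtain ⟨j, hj⟩ := exists_nat_gt (2/ε)
      exact ⟨j, by linarith⟩
    obtain ⟨N, hN⟩ := eventually_atTop.1 (hBCω j)
    obtain ⟨R, hR0, hR⟩ : ∃ R : ℕ, 1 ≤ R ∧ 4*c/ε < (R:ℝ) := by
      obtain ⟨R, hR⟩ := exists_nat_gt (max 1 (4*c/ε))
      refine ⟨R, ?_, lt_of_le_of_lt (le_max_right _ _) hR⟩
      have : (1:ℝ) ≤ R := le_of_lt (lt_of_le_of_lt (le_max_left _ _) hR)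
      exact_mod_cast this
    filter_upwards [hsqrt_tend.eventually_ge_atTop (max (N+1) R),
      eventually_ge_atTop 1] with m hm hm1
    set r : ℕ := Nat.sqrt m with hrdef
    have hrN : N + 1 ≤ r := le_trans (le_max_left _ _) hm
    have hrR : R ≤ r := le_trans (le_max_right _ _) hm
    have hr1 : 1 ≤ r := le_trans hR0 hrR
    have hrsq : r^2 ≤ m := Nat.sqrt_le' m
    have hm2 : m ≤ r^2 + 2*r := by
      have h := Nat.lt_succ_sqrt' m
      have h2 : (Nat.succ (Nat.sqrt m))^2 = r^2 + 2*r + 1 := by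
        rw [Nat.succ_eq_add_one]; ring
      omega
    have hnotB : ω ∉ B j (r-1) := hN (r-1) (by omega)
    have hcast : ((r-1 : ℕ) : ℝ) + 1 = (r:ℝ) := by
      have h : (r - 1) + 1 = r := by omega
      exact_mod_cast congrArg (Nat.cast : ℕ → ℝ) h
    have hidx : (r-1)+1 = r := by omega
    have hnotB' : ¬ (((r:ℝ)^2 / ((j:ℝ)+1))^2 ≤ (S (r^2) ω)^2) := by
      intro hcon
      apply hnotB
      show ((((r-1:ℕ):ℝ)+1)^2 / ((j:ℝ)+1))^2 ≤ (S (((r-1)+1)^2) ω)^2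
      rw [hcast, hidx]
      exact hcon
    push_neg at hnotB'
    have hjpos : (0:ℝ) < (j:ℝ)+1 := by positivity
    have hrpos : (0:ℝ) < (r:ℝ) := by exact_mod_cast hr1
    have hmpos : (0:ℝ) < (m:ℝ) := by exact_mod_cast hm1
    have hy : (0:ℝ) < (r:ℝ)^2 / ((j:ℝ)+1) := by positivity
    have habs : |S (r^2) ω| < (r:ℝ)^2 / ((j:ℝ)+1) := by
      by_contra hcon
      push_neg at hcon
      have hsq2 : ((r:ℝ)^2 / ((j:ℝ)+1))^2 ≤ (S (r^2) ω)^2 := by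
        calc ((r:ℝ)^2 / ((j:ℝ)+1))^2 ≤ |S (r^2) ω|^2 :=
              pow_le_pow_left₀ hy.le hcon 2
          _ = (S (r^2) ω)^2 := sq_abs _
      linarith
    have hcastr2 : ((r^2 : ℕ) : ℝ) = (r:ℝ)^2 := by push_cast; ring
    have hdiffm : |S m ω - S (r^2) ω| ≤ c * ((m:ℝ) - (r:ℝ)^2) := by
      have h := hdiffω (r^2) m hrsq
      rwa [hcastr2] at h
    have hrm : ((r:ℝ))^2 ≤ (m:ℝ) := by exact_mod_cast hrsq
    have hrm' : (m:ℝ) ≤ (r:ℝ)^2 + 2*(r:ℝ) := by exact_mod_cast hm2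
    have h1 : |S m ω| ≤ |S (r^2) ω| + c * ((m:ℝ) - (r:ℝ)^2) := by
      calc |S m ω| = |S (r^2) ω + (S m ω - S (r^2) ω)| := by congr 1; ring
        _ ≤ |S (r^2) ω| + |S m ω - S (r^2) ω| := abs_add_le _ _
        _ ≤ |S (r^2) ω| + c * ((m:ℝ) - (r:ℝ)^2) := by linarith
    have hA0 : (0:ℝ) ≤ |S (r^2) ω| := abs_nonneg _
    have ha : |S (r^2) ω| * ((j:ℝ)+1) < (m:ℝ) := by
      have h := (lt_div_iff₀ hjpos).1 habs
      linarith
    have hb : (2:ℝ) < ε*((j:ℝ)+1) := by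
      rw [div_lt_iff₀ hε] at hj
      linarith
    have hc2 : 2*|S (r^2) ω| < ε*(m:ℝ) := by
      have h6 := mul_lt_mul_of_pos_left ha hε
      have h7 := mul_le_mul_of_nonneg_right hb.le hA0
      have e : (ε*((j:ℝ)+1)) * |S (r^2) ω| = ε*(|S (r^2) ω| * ((j:ℝ)+1)) := by ring
      linarith
    have hεr : 4*c < ε*(r:ℝ) := by
      rw [div_lt_iff₀ hε] at hR
      have hRr : (R:ℝ) ≤ (r:ℝ) := by exact_mod_cast hrR
      have h5 : ε*(R:ℝ) ≤ ε*(r:ℝ) := mul_le_mul_of_nonneg_left hRr hε.le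
      have e : (R:ℝ)*ε = ε*(R:ℝ) := by ring
      linarith
    have hd : 2*(c*((m:ℝ) - (r:ℝ)^2)) ≤ ε*(m:ℝ) := by
      have e1 := mul_lt_mul_of_pos_right hεr hrpos
      have e2 : ε*((r:ℝ)^2) ≤ ε*m := mul_le_mul_of_nonneg_left hrm hε.le
      have e3 : c*((m:ℝ)-(r:ℝ)^2) ≤ c*(2*(r:ℝ)) :=
        mul_le_mul_of_nonneg_left (by linarith) hc.le
      have e4 : (ε*(r:ℝ))*(r:ℝ) = ε*((r:ℝ)^2) := by ring
      have e5 : (4*c)*(r:ℝ) = 4*(c*(r:ℝ)) := by ring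
      linarith
    have hmain : |S m ω| < ε * m := by linarith
    rw [abs_div, abs_of_pos hmpos, div_lt_iff₀ hmpos]
    linarith
  refine Metric.tendsto_atTop.2 fun ε hε => ?_
  obtain ⟨N, hN⟩ := eventually_atTop.1 (key ε hε)
  exact ⟨N, fun n hn => by rw [Real.dist_eq, sub_zero]; exact hN n hn⟩

/-- a process with uniformly positive drift `K` and bounded increments
satisfies `liminf ξ_n / n ≥ K` almost surely. -/
theorem liminf_div_ge_drift {Ω : Type*} {m : MeasurableSpace Ω}
    (μ : Measure Ω) [IsProbabilityMeasure μ]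
    (𝓕 : Filtration ℕ m) (ξ : ℕ → Ω → ℝ) (K K' : ℝ) (hK : 0 < K) (hK' : 0 < K')
    (hadapted : Adapted 𝓕 ξ) (hint : Integrable (ξ 0) μ)
    (hdrift : ∀ n : ℕ, ∀ᵐ ω ∂μ,
      ξ n ω + K ≤ (μ[ξ (n + 1) | 𝓕 n]) ω ∧ |ξ (n + 1) ω - ξ n ω| ≤ K') :
    ∀ᵐ ω ∂μ, ((K : ℝ) : EReal) ≤
      Filter.liminf (fun n : ℕ => ((ξ n ω / n : ℝ) : EReal)) atTop := by
  have hSM : ∀ n, StronglyMeasurable (ξ n) := fun n => ((hadapted n).mono (𝓕.le n) le_rfl).stronglyMeasurable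
  have hintn : ∀ n, Integrable (ξ n) μ := by
    intro n
    induction n with
    | zero => exact hint
    | succ n ih =>
      refine Integrable.mono' (ih.abs.add (integrable_const K'))
        (hSM (n+1)).aestronglyMeasurable ?_
      filter_upwards [hdrift n] with ω h
      rw [Real.norm_eq_abs]
      calc |ξ (n+1) ω| = |ξ n ω + (ξ (n+1) ω - ξ n ω)| := by congr 1; ring
        _ ≤ |ξ n ω| + |ξ (n+1) ω - ξ n ω| := abs_add_le _ _
        _ ≤ |ξ n ω| + K' := by linarith [h.2]
  set g : ℕ → Ω → ℝ := fun k => μ[(fun ω => ξ (k+1) ω - ξ k ω) | 𝓕 k] with hg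
  set D : ℕ → Ω → ℝ := fun k ω => ξ (k+1) ω - ξ k ω - g k ω with hD
  have hdiffint : ∀ k, Integrable (fun ω => ξ (k+1) ω - ξ k ω) μ :=
    fun k => (hintn (k+1)).sub (hintn k)
  have hgmeas : ∀ k, StronglyMeasurable[𝓕 k] (g k) := fun k => stronglyMeasurable_condExp
  have hgint : ∀ k, Integrable (g k) μ := fun k => integrable_condExp
  have hgle : ∀ k, ∀ᵐ ω ∂μ, |g k ω| ≤ K' := by
    intro k
    have h1 : g k ≤ᵐ[μ] μ[(fun _ => K')|𝓕 k] :=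
      condExp_mono (hdiffint k) (integrable_const K')
        (by filter_upwards [hdrift k] with ω h using (abs_le.1 h.2).2)
    have h2 : μ[(fun _ => -K')|𝓕 k] ≤ᵐ[μ] g k :=
      condExp_mono (integrable_const (-K')) (hdiffint k)
        (by filter_upwards [hdrift k] with ω h using (abs_le.1 h.2).1)
    rw [condExp_const (𝓕.le k)] at h1 h2
    filter_upwards [h1, h2] with ω a b
    exact abs_le.2 ⟨b, a⟩
  have hgK : ∀ k, ∀ᵐ ω ∂μ, K ≤ g k ω := by
    intro k
    have h2 : μ[ξ k|𝓕 k] = ξ k :=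
      condExp_of_stronglyMeasurable (𝓕.le k) (hadapted k).stronglyMeasurable (hintn k)
    have h1 : g k =ᵐ[μ] μ[ξ (k+1)|𝓕 k] - μ[ξ k|𝓕 k] :=
      condExp_sub (hintn (k+1)) (hintn k) _
    filter_upwards [h1, hdrift k] with ω he hd
    rw [he, h2, Pi.sub_apply]
    linarith [hd.1]
  have hcezero : ∀ k, μ[D k|𝓕 k] =ᵐ[μ] 0 := by
    intro k
    have h1 : D k = (fun ω => ξ (k+1) ω - ξ k ω) - g k := rfl
    have h3 : μ[g k|𝓕 k] = g k :=
      condExp_of_stronglyMeasurable (𝓕.le k) (hgmeas k) (hgint k)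
    rw [h1]
    refine (condExp_sub (hdiffint k) (hgint k) _).trans ?_
    rw [h3]
    rw [show μ[(fun ω => ξ (k+1) ω - ξ k ω)|𝓕 k] = g k from rfl, sub_self]
  have hDmeas : ∀ k, StronglyMeasurable[𝓕 (k+1)] (D k) := by
    intro k
    exact ((hadapted (k+1)).stronglyMeasurable.sub ((hadapted k).stronglyMeasurable.mono (𝓕.mono k.le_succ))).sub
      ((hgmeas k).mono (𝓕.mono k.le_succ))
  have hDbd : ∀ k, ∀ᵐ ω ∂μ, |D k ω| ≤ K' + K' := by
    intro k
    filter_upwards [hdrift k, hgle k] with ω h1 h2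
    calc |D k ω| = |(ξ (k+1) ω - ξ k ω) - g k ω| := rfl
      _ ≤ |ξ (k+1) ω - ξ k ω| + |g k ω| := abs_sub _ _
      _ ≤ K' + K' := add_le_add h1.2 h2
  have hmain := aux_mds_slln μ 𝓕 D (K'+K') (by linarith) hDmeas hDbd hcezero
  have hdecomp : ∀ n ω, ξ n ω =
      ξ 0 ω + (∑ k ∈ Finset.range n, D k ω) + ∑ k ∈ Finset.range n, g k ω := by
    intro n ω
    have h1 : ∀ k, D k ω + g k ω = ξ (k+1) ω - ξ k ω := fun k => by rw [hD]; ring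
    have h2 : ∑ k ∈ Finset.range n, (D k ω + g k ω) = ξ n ω - ξ 0 ω := by
      rw [Finset.sum_congr rfl (fun k _ => h1 k), Finset.sum_range_sub (fun k => ξ k ω)]
    rw [Finset.sum_add_distrib] at h2
    linarith
  filter_upwards [hmain, ae_all_iff.2 hgK] with ω htend hgKω
  have hev : ∀ᶠ n : ℕ in atTop,
      (ξ 0 ω)/n + (∑ k ∈ Finset.range n, D k ω)/n + K ≤ ξ n ω / n := by
    filter_upwards [eventually_ge_atTop 1] with n hn
    have hnpos : (0:ℝ) < n := by exact_mod_cast hn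
    have hsum : K * n ≤ ∑ k ∈ Finset.range n, g k ω := by
      calc K*n = ∑ _k ∈ Finset.range n, K := by rw [Finset.sum_const]; simp [mul_comm]
        _ ≤ _ := Finset.sum_le_sum fun k _ => hgKω k
    have hGK : K ≤ (∑ k ∈ Finset.range n, g k ω)/n := (le_div_iff₀ hnpos).2 hsum
    rw [hdecomp n ω, add_div, add_div]
    linarith
  have htend2 : Tendsto
      (fun n : ℕ => (ξ 0 ω)/n + (∑ k ∈ Finset.range n, D k ω)/n + K) atTop (𝓝 K) := by
    have h0 : Tendsto (fun n : ℕ => (ξ 0 ω)/n) atTop (𝓝 0) :=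
      tendsto_const_div_atTop_nhds_zero_nat _
    have := (h0.add htend).add (tendsto_const_nhds (x := K) (f := atTop (α := ℕ)))
    simpa using this
  have htendE : Tendsto
      (fun n : ℕ => (((ξ 0 ω)/n + (∑ k ∈ Finset.range n, D k ω)/n + K : ℝ) : EReal))
      atTop (𝓝 ((K : ℝ) : EReal)) := by
    exact (continuous_coe_real_ereal.continuousAt).tendsto.comp htend2
  calc ((K : ℝ) : EReal)
      = Filter.liminf (fun n : ℕ =>
          (((ξ 0 ω)/n + (∑ k ∈ Finset.range n, D k ω)/n + K : ℝ) : EReal)) atTop :=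
        htendE.liminf_eq.symm
    _ ≤ Filter.liminf (fun n : ℕ => ((ξ n ω / n : ℝ) : EReal)) atTop := by
        refine liminf_le_liminf ?_
        filter_upwards [hev] with n hn
        exact EReal.coe_le_coe_iff.2 hn
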